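/- Every positive sublinear function g : ℤ₊ → ℝ₊ (i.e., g(n)/n → 0 as n → ∞) is bounded above by a concave sublinear function f : ℝ₊ → ℝ₊. -/

import Mathlib

open Filter

/-- Every positive sublinear function `g : ℤ₊ → ℝ₊` (i.e. `g n / n → 0`) is bounded
above by a concave sublinear function `f : ℝ₊ → ℝ₊`. -/
theorem stmt0 (g : ℕ → ℝ) (hgpos : ∀ n : ℕ, 1 ≤ n → 0 < g n)
    (hgsub : Tendsto (fun n : ℕ => g n / n) atTop (nhds 0)) :
    ∃ f : ℝ → ℝ, ConcaveOn ℝ (Set.Ici 0) f ∧ (∀ x : ℝ, 0 ≤ x → 0 ≤ f x) ∧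
      Tendsto (fun x : ℝ => f x / x) atTop (nhds 0) ∧
      ∀ n : ℕ, 1 ≤ n → g n ≤ f n := by
  set a : ℕ → ℝ := fun n => g n / n with ha
  have ha0 : ∀ n, 0 ≤ a n := by
    intro n
    rcases Nat.eq_zero_or_pos n with h | h
    · simp [ha, h]
    · exact le_of_lt (div_pos (hgpos n h) (by exact_mod_cast h))
  have hbdd : BddAbove (Set.range a) := hgsub.bddAbove_range
  set b : ℕ → ℝ := fun k => ⨆ n, a (n + k) with hb
  have hbdd' : ∀ k, BddAbove (Set.range fun n => a (n + k)) := by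
    intro k
    refine hbdd.mono ?_
    rintro x ⟨n, rfl⟩
    exact ⟨n + k, rfl⟩
  have hb_ge : ∀ k n, k ≤ n → a n ≤ b k := by
    intro k n hkn
    have := le_ciSup (hbdd' k) (n - k)
    rwa [Nat.sub_add_cancel hkn] at this
  have hb0 : ∀ k, 0 ≤ b k := fun k => le_trans (ha0 k) (hb_ge k k le_rfl)
  have hb_small : ∀ ε : ℝ, 0 < ε → ∃ k, b k < ε := by
    intro ε hε
    have : ∀ᶠ n in atTop, a n < ε / 2 := by
      have := hgsub.eventually (gt_mem_nhds (half_pos hε))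
      exact this
    obtain ⟨N, hN⟩ := this.exists_forall_of_atTop
    refine ⟨N, lt_of_le_of_lt (ciSup_le fun n => le_of_lt (hN (n + N) (Nat.le_add_left N n)))
      (half_lt_self hε)⟩
  set c : ℕ → ℝ := fun k => ∑ i ∈ Finset.range k, |g i| with hc
  have hc0 : ∀ k, 0 ≤ c k := fun k => Finset.sum_nonneg fun i _ => abs_nonneg _
  set f : ℝ → ℝ := fun x => ⨅ k, (b k * x + c k) with hf
  have hterm0 : ∀ (x : ℝ), 0 ≤ x → ∀ k, 0 ≤ b k * x + c k := fun x hx k =>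
    add_nonneg (mul_nonneg (hb0 k) hx) (hc0 k)
  have hfbdd : ∀ (x : ℝ), 0 ≤ x → BddBelow (Set.range fun k => b k * x + c k) := by
    intro x hx
    exact ⟨0, by rintro y ⟨k, rfl⟩; exact hterm0 x hx k⟩
  have hf0 : ∀ x : ℝ, 0 ≤ x → 0 ≤ f x := fun x hx => le_ciInf (hterm0 x hx)
  have hfle : ∀ (x : ℝ), 0 ≤ x → ∀ k, f x ≤ b k * x + c k := fun x hx k =>
    ciInf_le (hfbdd x hx) k
  have hgle : ∀ n : ℕ, 1 ≤ n → ∀ k, g n ≤ b k * n + c k := by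
    intro n hn k
    by_cases h : k ≤ n
    · have hgn : g n = a n * n := by
        have hn0 : (n : ℝ) ≠ 0 := by exact_mod_cast (show n ≠ 0 by omega)
        show g n = g n / n * n
        rw [div_mul_cancel₀ _ hn0]
      calc g n = a n * n := hgn
        _ ≤ b k * n := by
            apply mul_le_mul_of_nonneg_right (hb_ge k n h) (by positivity)
        _ ≤ b k * n + c k := le_add_of_nonneg_right (hc0 k)
    · push_neg at h
      calc g n ≤ |g n| := le_abs_self _
        _ ≤ c k := Finset.single_le_sum (fun i _ => abs_nonneg (g i))
              (Finset.mem_range.mpr h)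
        _ ≤ b k * n + c k := le_add_of_nonneg_left (mul_nonneg (hb0 k) (by positivity))
  refine ⟨f, ?_, hf0, ?_, ?_⟩
  · refine ⟨convex_Ici 0, ?_⟩
    intro x hx y hy p q hp hq hpq
    simp only [smul_eq_mul]
    refine le_ciInf fun k => ?_
    have h1 : p * f x ≤ p * (b k * x + c k) :=
      mul_le_mul_of_nonneg_left (hfle x hx k) hp
    have h2 : q * f y ≤ q * (b k * y + c k) :=
      mul_le_mul_of_nonneg_left (hfle y hy k) hq
    have : p * (b k * x + c k) + q * (b k * y + c k) = b k * (p * x + q * y) + c k := by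
      linear_combination c k * hpq
    linarith
  · rw [Metric.tendsto_atTop]
    intro ε hε
    obtain ⟨k, hk⟩ := hb_small (ε / 2) (half_pos hε)
    refine ⟨max 1 (c k / (ε / 2) + 1), fun x hx => ?_⟩
    have hx1 : (1 : ℝ) ≤ x := le_trans (le_max_left _ _) hx
    have hxpos : 0 < x := lt_of_lt_of_le one_pos hx1
    have hx2 : c k / (ε / 2) + 1 ≤ x := le_trans (le_max_right _ _) hx
    have hck : c k < ε / 2 * x := by
      have h1 : c k / (ε / 2) < x := lt_of_lt_of_le (lt_add_one _) hx2
      have := (div_lt_iff₀ (half_pos hε)).mp h1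
      linarith
    have hfx : f x / x ≤ b k + c k / x := by
      have heq : (b k * x + c k) / x = b k + c k / x := by
        field_simp
      calc f x / x ≤ (b k * x + c k) / x := by
            gcongr
            exact hfle x (le_of_lt hxpos) k
        _ = b k + c k / x := heq
    have hfxnn : 0 ≤ f x / x := div_nonneg (hf0 x (le_of_lt hxpos)) (le_of_lt hxpos)
    rw [Real.dist_eq, sub_zero, abs_of_nonneg hfxnn]
    have : c k / x < ε / 2 := (div_lt_iff₀ hxpos).mpr (by linarith)
    linarith
  · intro n hn
    exact le_ciInf (hgle n hn)
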